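/- The link product of positive semidefinite operators is positive semidefinite: if A is a positive semidefinite matrix on ℂᵃ ⊗ ℂᵈ and B is a positive semidefinite matrix on ℂᵈ ⊗ ℂᵇ, then the link product A * B = Tr_d[(Aᶿᵈ ⊗ I_b)(I_a ⊗ B)] is a positive semidefinite matrix on ℂᵃ ⊗ ℂᵇ. -/

import Mathlib

open Matrix Kronecker ComplexOrder

/-- The partial trace over the middle factor of a matrix on `ℂˣ ⊗ ℂᴶ ⊗ ℂʸ`:
`(Tr_J M)_{(x,y),(x',y')} = Σ_k M_{(x,(k,y)),(x',(k,y'))}`. -/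
noncomputable def ptraceMid {x J y : Type*} [Fintype J]
    (M : Matrix (x × J × y) (x × J × y) ℂ) : Matrix (x × y) (x × y) ℂ :=
  fun p q => ∑ k : J, M (p.1, (k, p.2)) (q.1, (k, q.2))

/-- Partial transposition on the second tensor factor:
`(Mᶿᴶ)_{(a,j),(b,j')} = M_{(a,j'),(b,j)}`. -/
def ptransposeSnd {x J : Type*} (M : Matrix (x × J) (x × J) ℂ) :
    Matrix (x × J) (x × J) ℂ :=
  fun p q => M (p.1, q.2) (q.1, p.2)

/-- Partial transposition on the first tensor factor:
`(Mᶿᴶ)_{(j,a),(j',b)} = M_{(j',a),(j,b)}`. -/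
def ptransposeFst {J y : Type*} (M : Matrix (J × y) (J × y) ℂ) :
    Matrix (J × y) (J × y) ℂ :=
  fun p q => M (q.1, p.2) (p.1, q.2)

/-- The link product of `A` on `ℂˣ ⊗ ℂᴶ` and `B` on `ℂᴶ ⊗ ℂʸ` over the common factor `ℂᴶ`:
`A * B := Tr_J[(Aᶿᴶ ⊗ I_y)(I_x ⊗ B)]`, a matrix on `ℂˣ ⊗ ℂʸ` (identity factors inserted in
the tensor fashion, tensor factors matched via the canonical associativity reordering). -/
noncomputable def linkProduct {x J y : Type*} [Fintype x] [Fintype J] [Fintype y]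
    [DecidableEq x] [DecidableEq y]
    (A : Matrix (x × J) (x × J) ℂ) (B : Matrix (J × y) (J × y) ℂ) :
    Matrix (x × y) (x × y) ℂ :=
  ptraceMid
    ((Matrix.reindex (Equiv.prodAssoc x J y) (Equiv.prodAssoc x J y)
        (ptransposeSnd A ⊗ₖ (1 : Matrix y y ℂ))) *
      ((1 : Matrix x x ℂ) ⊗ₖ B))


lemma linkProduct_apply' {a d b : Type*} [Fintype a] [Fintype d] [Fintype b]
    [DecidableEq a] [DecidableEq d] [DecidableEq b]
    (A : Matrix (a × d) (a × d) ℂ) (B : Matrix (d × b) (d × b) ℂ) (p q : a × b) :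
    linkProduct A B p q = ∑ i : d, ∑ j : d, A (p.1, i) (q.1, j) * B (i, p.2) (j, q.2) := by
  simp [linkProduct, ptraceMid, ptransposeSnd, mul_apply, Fintype.sum_prod_type,
    one_apply, Finset.mul_sum, Finset.sum_mul, Equiv.prodAssoc]
  rw [Finset.sum_comm]

lemma sum4comm' {α β γ δ : Type*} [Fintype α] [Fintype β] [Fintype γ] [Fintype δ]
    (f : α → β → γ → δ → ℂ) :
    ∑ i : α, ∑ j : β, ∑ m : γ, ∑ n : δ, f i j m n
      = ∑ m : γ, ∑ n : δ, ∑ i : α, ∑ j : β, f i j m n := by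
  calc ∑ i : α, ∑ j : β, ∑ m : γ, ∑ n : δ, f i j m n
      = ∑ i : α, ∑ m : γ, ∑ j : β, ∑ n : δ, f i j m n :=
        Finset.sum_congr rfl fun i _ => Finset.sum_comm
    _ = ∑ m : γ, ∑ i : α, ∑ j : β, ∑ n : δ, f i j m n := Finset.sum_comm
    _ = ∑ m : γ, ∑ i : α, ∑ n : δ, ∑ j : β, f i j m n :=
        Finset.sum_congr rfl fun m _ => Finset.sum_congr rfl fun i _ => Finset.sum_comm
    _ = ∑ m : γ, ∑ n : δ, ∑ i : α, ∑ j : β, f i j m n :=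
        Finset.sum_congr rfl fun m _ => Finset.sum_comm

/-- The link product of positive semidefinite operators is positive
semidefinite: if `A` is positive semidefinite on `ℂᵃ ⊗ ℂᵈ` and `B` is positive semidefinite
on `ℂᵈ ⊗ ℂᵇ`, then the link product `A * B = Tr_d[(Aᶿᵈ ⊗ I_b)(I_a ⊗ B)]` is positive
semidefinite on `ℂᵃ ⊗ ℂᵇ`. -/
theorem linkProduct_posSemidef {a d b : Type*} [Fintype a] [Fintype d] [Fintype b]
    [DecidableEq a] [DecidableEq d] [DecidableEq b]
    (A : Matrix (a × d) (a × d) ℂ) (B : Matrix (d × b) (d × b) ℂ)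
    (hA : A.PosSemidef) (hB : B.PosSemidef) :
    (linkProduct A B).PosSemidef := by
  obtain ⟨S, hS⟩ := by
    open scoped MatrixOrder in exact CStarAlgebra.nonneg_iff_eq_star_mul_self.mp hA.nonneg
  rw [star_eq_conjTranspose] at hS
  obtain ⟨T, hT⟩ := by
    open scoped MatrixOrder in exact CStarAlgebra.nonneg_iff_eq_star_mul_self.mp hB.nonneg
  rw [star_eq_conjTranspose] at hT
  set U : Matrix ((a × d) × (d × b)) (a × b) ℂ :=
    fun mn q => ∑ j : d, S mn.1 (q.1, j) * T mn.2 (j, q.2) with hU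
  have key : linkProduct A B = Uᴴ * U := by
    ext p q
    rw [linkProduct_apply', hS, hT]
    conv_rhs => rw [mul_apply]; simp only [conjTranspose_apply]
    simp only [mul_apply, conjTranspose_apply, hU, star_sum, star_mul',
      Finset.sum_mul_sum]
    rw [sum4comm']
    conv_rhs => rw [Fintype.sum_prod_type]
    refine Finset.sum_congr rfl fun m _ => Finset.sum_congr rfl fun n _ =>
      Finset.sum_congr rfl fun i _ => Finset.sum_congr rfl fun j _ => by ring
  rw [key]
  exact Matrix.posSemidef_conjTranspose_mul_self U
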